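/- There exists a constant C > 0 such that for every integer n ≥ 2, every a ∈ ℝⁿ with ‖a‖ < 1/8, every x in the open unit ball of ℝⁿ with x ≠ a, and every y ∈ ℝⁿ with ‖y‖ = 1, it holds that ‖π_a(x) − y‖ ≤ C·‖x − y‖. -/

import Mathlib

open scoped RealInnerProductSpace

/-- The scalar factor `t_a(x)` of the radial projection from `a` onto the unit sphere. -/
noncomputable def tproj {n : ℕ} (a x : EuclideanSpace ℝ (Fin n)) : ℝ :=
  -(⟪a, x - a⟫ / ‖x - a‖) + Real.sqrt ((⟪a, x - a⟫ / ‖x - a‖) ^ 2 + 1 - ‖a‖ ^ 2)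

/-- The radial projection `π_a(x) = a + t_a(x)·(x−a)/‖x−a‖` from `a` onto the unit sphere. -/
noncomputable def piProj {n : ℕ} (a x : EuclideanSpace ℝ (Fin n)) :
    EuclideanSpace ℝ (Fin n) :=
  a + (tproj a x / ‖x - a‖) • (x - a)

set_option maxHeartbeats 2000000 in
/-- Second estimate in (est:pi_a) from the proof of Proposition 3.2 (prop:approx):
there is a universal constant `C > 0` such that for every `n ≥ 2`, every `a` with
`‖a‖ < 1/8`, every `x` in the open unit ball with `x ≠ a`, and every unit vector `y`,
`‖π_a(x) − y‖ ≤ C·‖x − y‖`. -/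
theorem stmt_12 :
    ∃ C : ℝ, 0 < C ∧ ∀ n : ℕ, 2 ≤ n → ∀ a x y : EuclideanSpace ℝ (Fin n),
      ‖a‖ < 1 / 8 → ‖x‖ < 1 → x ≠ a → ‖y‖ = 1 →
        ‖piProj a x - y‖ ≤ C * ‖x - y‖ := by
  refine ⟨4, by norm_num, ?_⟩
  intro n hn a x y ha hx hxa hy
  set r : ℝ := ‖x - a‖ with hr_def
  have hr : 0 < r := by
    rw [hr_def]
    exact norm_sub_pos_iff.mpr hxa
  set α : ℝ := ⟪a, x - a⟫ / ‖x - a‖ with hα_def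
  set D : ℝ := α ^ 2 + 1 - ‖a‖ ^ 2 with hD_def
  set t : ℝ := tproj a x with ht_def
  have ht : t = -α + Real.sqrt D := rfl
  have hI : ⟪a, x - a⟫ = α * r := by
    rw [hα_def]; exact (div_mul_cancel₀ _ hr.ne').symm
  have hαabs : |α| ≤ 1 / 8 := by
    have h1 : |⟪a, x - a⟫| ≤ ‖a‖ * ‖x - a‖ := abs_real_inner_le_norm a (x - a)
    rw [hα_def, abs_div, abs_norm]
    rw [div_le_iff₀ hr]
    calc |⟪a, x - a⟫| ≤ ‖a‖ * r := h1
      _ ≤ 1 / 8 * r := by nlinarith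
  have hα1 : -(1/8) ≤ α := (abs_le.mp hαabs).1
  have ha0 : 0 ≤ ‖a‖ := norm_nonneg a
  have hD49 : (7/8 : ℝ)^2 ≤ D := by
    rw [hD_def]; nlinarith [sq_nonneg α]
  have hD0 : 0 ≤ D := by nlinarith
  have hsqrtD : 7/8 ≤ Real.sqrt D := by
    rw [show (7/8 : ℝ) = Real.sqrt ((7/8)^2) from (Real.sqrt_sq (by norm_num)).symm]
    exact Real.sqrt_le_sqrt hD49
  have hDsq : (Real.sqrt D) ^ 2 = D := Real.sq_sqrt hD0
  have hxeq : a + (x - a) = x := by abel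
  have hnormx : ‖x‖ ^ 2 = ‖a‖ ^ 2 + 2 * (α * r) + r ^ 2 := by
    have h2 := norm_add_sq_real a (x - a)
    rw [hxeq, hI] at h2
    exact h2
  have hx2 : 1 - ‖x‖ ^ 2 = D - (r + α) ^ 2 := by
    rw [hnormx, hD_def]; ring
  have hxpos : 0 < 1 - ‖x‖ ^ 2 := by nlinarith [norm_nonneg x]
  have hS : 3/4 ≤ Real.sqrt D + (r + α) := by linarith
  have hkey : (t - r) * (Real.sqrt D + (r + α)) = 1 - ‖x‖ ^ 2 := by
    rw [ht, hx2]; nlinarith [hDsq]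
  have htr_pos : 0 < t - r := by
    rcases mul_pos_iff.mp (by rw [hkey]; exact hxpos :
        0 < (t - r) * (Real.sqrt D + (r + α))) with ⟨h, _⟩ | ⟨_, h2⟩
    · exact h
    · linarith
  have hxy1 : 1 - ‖x‖ ≤ ‖x - y‖ := by
    have h3 : ‖y‖ - ‖x‖ ≤ ‖y - x‖ := norm_sub_norm_le y x
    rw [norm_sub_rev] at h3
    linarith [h3, hy.symm ▸ h3]
  have hxynn : 0 ≤ ‖x - y‖ := norm_nonneg _
  have htr_le : t - r ≤ (8/3) * ‖x - y‖ := by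
    have h4 : t - r ≤ (4/3) * (1 - ‖x‖ ^ 2) := by
      have h4a : (t - r) * (3/4) ≤ 1 - ‖x‖ ^ 2 := by
        calc (t - r) * (3/4) ≤ (t - r) * (Real.sqrt D + (r + α)) :=
              mul_le_mul_of_nonneg_left hS htr_pos.le
          _ = 1 - ‖x‖ ^ 2 := hkey
      linarith
    have h5 : 1 - ‖x‖ ^ 2 ≤ 2 * (1 - ‖x‖) := by nlinarith [norm_nonneg x]
    nlinarith
  have hpix : ‖piProj a x - x‖ = t - r := by
    have h1 : piProj a x - x = (t / r - 1) • (x - a) := by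
      rw [piProj, ← ht_def, ← hr_def, sub_smul, one_smul]
      abel
    rw [h1, norm_smul, Real.norm_eq_abs, ← hr_def]
    rw [abs_of_pos (by rw [sub_pos, lt_div_iff₀ hr]; linarith)]
    field_simp
  have hsplit : piProj a x - y = (piProj a x - x) + (x - y) := by abel
  calc ‖piProj a x - y‖ ≤ ‖piProj a x - x‖ + ‖x - y‖ := by
        rw [hsplit]; exact norm_add_le _ _
    _ = (t - r) + ‖x - y‖ := by rw [hpix]
    _ ≤ (8/3) * ‖x - y‖ + ‖x - y‖ := by linarith
    _ ≤ 4 * ‖x - y‖ := by linarith
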